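/- Let points p_1 < p_2 < ... < p_m be the start- and endpoints of a finite family of closed intervals I ∪ I' where I'_j ⊇ I_j for each j. For each i let α_i be the number of intervals of I containing p_i and β_i = |{j : p_i ∉ I_j, p_i ∈ I'_j}|. Then max over X ⊆ [n] with |X| ≤ k of ω(G(I_X)) equals max_i (α_i + min(β_i, k)), where I_X replaces I_j by I'_j for j ∈ X and ω is the maximum clique size. -/

import Mathlib

def intervalGraph {n : ℕ} (J : Fin n → ℝ × ℝ) : SimpleGraph (Fin n) where
  Adj u v := u ≠ v ∧ (Set.Icc (J u).1 (J u).2 ∩ Set.Icc (J v).1 (J v).2).Nonempty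
  symm := by
    constructor
    rintro u v ⟨h, x, hx⟩
    exact ⟨h.symm, x, hx.2, hx.1⟩
  loopless := by constructor; rintro v ⟨h, _⟩; exact h rfl

/-- The clique number: the maximum size of a clique. -/
noncomputable def cliqueN {W : Type*} (G : SimpleGraph W) : ℕ :=
  sSup {m : ℕ | ∃ s : Finset W, G.IsClique ↑s ∧ s.card = m}

lemma intervalGraph_adj {n : ℕ} (J : Fin n → ℝ × ℝ) (u v : Fin n) :
    (intervalGraph J).Adj u v ↔
      u ≠ v ∧ (Set.Icc (J u).1 (J u).2 ∩ Set.Icc (J v).1 (J v).2).Nonempty :=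
  Iff.rfl

lemma cliqueSet_bdd {n : ℕ} (G : SimpleGraph (Fin n)) :
    {m : ℕ | ∃ s : Finset (Fin n), G.IsClique ↑s ∧ s.card = m} ⊆ Set.Iic n := by
  rintro m ⟨s, -, rfl⟩
  simpa using (Finset.card_le_univ s).trans_eq (by simp)

lemma le_cliqueN {n : ℕ} (G : SimpleGraph (Fin n)) (s : Finset (Fin n))
    (h : G.IsClique ↑s) : s.card ≤ cliqueN G :=
  le_csSup ⟨n, fun _ hm => cliqueSet_bdd G hm⟩ ⟨s, h, rfl⟩

lemma cliqueN_le {n : ℕ} (G : SimpleGraph (Fin n)) {m : ℕ}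
    (h : ∀ s : Finset (Fin n), G.IsClique ↑s → s.card ≤ m) : cliqueN G ≤ m :=
  csSup_le' (by rintro x ⟨s, hs, rfl⟩; exact h s hs)

lemma cliqueN_le_n {n : ℕ} (G : SimpleGraph (Fin n)) : cliqueN G ≤ n :=
  cliqueN_le G fun s _ => by simpa using Finset.card_le_univ s

/-- Clique number assistance formula: the maximum over `|X| ≤ k` of
`ω(G(I_X))` equals `max_i (α_i + min(β_i, k))`, where the max is over all
start- and endpoints `p_i` of intervals in `I ∪ I'`, `α_i` counts original
intervals containing `p_i`, and `β_i` counts intervals whose expansion, but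
not original, contains `p_i`. -/
theorem stmt17 {n : ℕ} (a b a' b' : Fin n → ℝ) (k : ℕ)
    (hab : ∀ j, a j ≤ b j)
    (hexp : ∀ j, a' j ≤ a j ∧ b j ≤ b' j) :
    sSup {m : ℕ | ∃ X : Finset (Fin n), X.card ≤ k ∧
        m = cliqueN (intervalGraph fun j =>
          if j ∈ X then (a' j, b' j) else (a j, b j))}
      = ((Finset.univ.image a) ∪ (Finset.univ.image b) ∪
          (Finset.univ.image a') ∪ (Finset.univ.image b')).sup fun x =>
          (Finset.univ.filter fun j : Fin n => a j ≤ x ∧ x ≤ b j).card +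
            min ((Finset.univ.filter fun j : Fin n =>
              ¬ (a j ≤ x ∧ x ≤ b j) ∧ a' j ≤ x ∧ x ≤ b' j).card) k := by
  classical
  apply le_antisymm
  · apply csSup_le'
    rintro m ⟨X, hXk, rfl⟩
    apply cliqueN_le
    intro s hs
    rcases s.eq_empty_or_nonempty with rfl | hne
    · simp
    obtain ⟨j0, hj0s, hj0max⟩ := s.exists_max_image
      (fun j => ((if j ∈ X then (a' j, b' j) else (a j, b j)) : ℝ × ℝ).1) hne
    set p : ℝ := ((if j0 ∈ X then (a' j0, b' j0) else (a j0, b j0)) : ℝ × ℝ).1 with hp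
    have hpP : p ∈ ((Finset.univ.image a) ∪ (Finset.univ.image b) ∪
          (Finset.univ.image a') ∪ (Finset.univ.image b')) := by
      by_cases h : j0 ∈ X
      · have hpe : p = a' j0 := by simp [hp, h]
        rw [hpe]
        simp only [Finset.mem_union, Finset.mem_image]
        exact Or.inl (Or.inr ⟨j0, Finset.mem_univ _, rfl⟩)
      · have hpe : p = a j0 := by simp [hp, h]
        rw [hpe]
        simp only [Finset.mem_union, Finset.mem_image]
        exact Or.inl (Or.inl (Or.inl ⟨j0, Finset.mem_univ _, rfl⟩))
    have hcov : ∀ i ∈ s, ((if i ∈ X then (a' i, b' i) else (a i, b i)) : ℝ × ℝ).1 ≤ p ∧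
        p ≤ ((if i ∈ X then (a' i, b' i) else (a i, b i)) : ℝ × ℝ).2 := by
      intro i hi
      refine ⟨hj0max i hi, ?_⟩
      rcases eq_or_ne i j0 with rfl | hne'
      · rw [hp]
        by_cases h : i ∈ X
        · simp only [if_pos h]
          exact le_trans (le_trans (hexp i).1 (hab i)) (hexp i).2
        · simp only [if_neg h]
          exact hab i
      · have hadj := (intervalGraph_adj _ j0 i).mp
          (hs (Finset.mem_coe.mpr hj0s) (Finset.mem_coe.mpr hi) hne'.symm)
        obtain ⟨-, y, hy⟩ := hadj
        rw [hp]
        exact le_trans hy.1.1 hy.2.2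
    have hsub : s ⊆ (Finset.univ.filter fun j => a j ≤ p ∧ p ≤ b j) ∪
        (X.filter fun j => ¬(a j ≤ p ∧ p ≤ b j) ∧ a' j ≤ p ∧ p ≤ b' j) := by
      intro i hi
      obtain ⟨h1, h2⟩ := hcov i hi
      by_cases horig : a i ≤ p ∧ p ≤ b i
      · exact Finset.mem_union_left _ (by simp [horig])
      · refine Finset.mem_union_right _ ?_
        by_cases hiX : i ∈ X
        · simp only [if_pos hiX] at h1 h2
          exact Finset.mem_filter.mpr ⟨hiX, horig, h1, h2⟩
        · simp only [if_neg hiX] at h1 h2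
          exact absurd ⟨h1, h2⟩ horig
    calc s.card ≤ _ := Finset.card_le_card hsub
      _ ≤ (Finset.univ.filter fun j => a j ≤ p ∧ p ≤ b j).card +
          (X.filter fun j => ¬(a j ≤ p ∧ p ≤ b j) ∧ a' j ≤ p ∧ p ≤ b' j).card :=
        Finset.card_union_le _ _
      _ ≤ (Finset.univ.filter fun j : Fin n => a j ≤ p ∧ p ≤ b j).card +
            min ((Finset.univ.filter fun j : Fin n =>
              ¬ (a j ≤ p ∧ p ≤ b j) ∧ a' j ≤ p ∧ p ≤ b' j).card) k := by
        refine Nat.add_le_add_left (le_min ?_ ?_) _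
        · exact Finset.card_le_card fun i hi => by
            simp only [Finset.mem_filter] at hi ⊢
            exact ⟨Finset.mem_univ _, hi.2⟩
        · exact le_trans (Finset.card_le_card (Finset.filter_subset _ _)) hXk
      _ ≤ _ := Finset.le_sup (f := fun x =>
          (Finset.univ.filter fun j : Fin n => a j ≤ x ∧ x ≤ b j).card +
            min ((Finset.univ.filter fun j : Fin n =>
              ¬ (a j ≤ x ∧ x ≤ b j) ∧ a' j ≤ x ∧ x ≤ b' j).card) k) hpP
  · apply Finset.sup_le
    intro x _
    set A := Finset.univ.filter fun j : Fin n => a j ≤ x ∧ x ≤ b j with hA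
    set B := Finset.univ.filter fun j : Fin n =>
      ¬(a j ≤ x ∧ x ≤ b j) ∧ a' j ≤ x ∧ x ≤ b' j with hB
    obtain ⟨X, hXB, hXcard⟩ := Finset.exists_subset_card_eq (min_le_left B.card k)
    have hcov : ∀ i ∈ A ∪ X,
        ((if i ∈ X then (a' i, b' i) else (a i, b i)) : ℝ × ℝ).1 ≤ x ∧
        x ≤ ((if i ∈ X then (a' i, b' i) else (a i, b i)) : ℝ × ℝ).2 := by
      intro i hi
      by_cases hiX : i ∈ X
      · have hiB := hXB hiX
        rw [hB, Finset.mem_filter] at hiB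
        simp only [if_pos hiX]
        exact ⟨hiB.2.2.1, hiB.2.2.2⟩
      · have hiA : i ∈ A := by
          rcases Finset.mem_union.mp hi with h | h
          · exact h
          · exact absurd h hiX
        rw [hA, Finset.mem_filter] at hiA
        simp only [if_neg hiX]
        exact hiA.2
    have hclique : (intervalGraph fun j =>
        if j ∈ X then (a' j, b' j) else (a j, b j)).IsClique ↑(A ∪ X) := by
      intro u hu v hv huv
      exact (intervalGraph_adj _ u v).mpr ⟨huv, x,
        ⟨(hcov u (Finset.mem_coe.mp hu)).1, (hcov u (Finset.mem_coe.mp hu)).2⟩,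
        ⟨(hcov v (Finset.mem_coe.mp hv)).1, (hcov v (Finset.mem_coe.mp hv)).2⟩⟩
    have hdisj : Disjoint A X := by
      rw [Finset.disjoint_left]
      intro i hiA hiX
      have hiB := hXB hiX
      rw [hB, Finset.mem_filter] at hiB
      rw [hA, Finset.mem_filter] at hiA
      exact hiB.2.1 hiA.2
    have hcard : (A ∪ X).card = A.card + min B.card k := by
      rw [Finset.card_union_of_disjoint hdisj, hXcard]
    have h1 : A.card + min B.card k ≤ cliqueN (intervalGraph fun j =>
        if j ∈ X then (a' j, b' j) else (a j, b j)) :=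
      hcard ▸ le_cliqueN _ _ hclique
    refine le_trans h1 (le_csSup ⟨n, ?_⟩ ⟨X, ?_, rfl⟩)
    · rintro m ⟨X', -, rfl⟩
      exact cliqueN_le_n _
    · rw [hXcard]; exact min_le_right _ _
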